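/- Let σ be the uniform distribution over the sphere of radius r in ℝ^n with n ≥ 4, and let u be a unit vector. Then for any t ≥ 0, P_{x∼σ}[⟨u,x⟩ ≥ t] ≤ √2 · exp(−t²(n−2)/(2r²)). -/

import Mathlib

open MeasureTheory
open scoped RealInnerProductSpace

namespace SphereConc

open Real Filter

noncomputable section

/-! ### coordinate basics -/

lemma pow2k_nonneg (a : ℝ) (k : ℕ) : 0 ≤ a ^ (2 * k) := by
  rw [pow_mul]; positivity

lemma sq_sum_eq {n : ℕ} (x : EuclideanSpace ℝ (Fin n)) : ‖x‖ ^ 2 = ∑ i, (x i) ^ 2 := by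
  rw [EuclideanSpace.norm_eq, Real.sq_sqrt (by positivity)]
  simp [Real.norm_eq_abs, sq_abs]

lemma coord_abs {n : ℕ} (i : Fin n) (x : EuclideanSpace ℝ (Fin n)) : |x i| ≤ ‖x‖ := by
  have h1 : (x i) ^ 2 ≤ ‖x‖ ^ 2 := by
    rw [sq_sum_eq]
    exact Finset.single_le_sum (f := fun j => (x j) ^ 2) (fun j _ => sq_nonneg _)
      (Finset.mem_univ i)
  calc |x i| = Real.sqrt ((x i) ^ 2) := (Real.sqrt_sq_eq_abs _).symm
    _ ≤ Real.sqrt (‖x‖ ^ 2) := Real.sqrt_le_sqrt h1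
    _ = ‖x‖ := by rw [Real.sqrt_sq (norm_nonneg _)]

lemma coord_cont {n : ℕ} (i : Fin n) : Continuous fun x : EuclideanSpace ℝ (Fin n) => x i :=
  (continuous_apply i).comp (PiLp.continuous_ofLp 2 _)

/-! ### rotations in two coordinates -/

def rotFun {n : ℕ} (φ : ℝ) (i j : Fin n) (x : EuclideanSpace ℝ (Fin n)) :
    EuclideanSpace ℝ (Fin n) :=
  WithLp.toLp 2 fun t => if t = i then Real.cos φ * x i - Real.sin φ * x j
           else if t = j then Real.sin φ * x i + Real.cos φ * x j else x t

lemma rotFun_apply_i {n : ℕ} (φ : ℝ) (i j : Fin n) (x : EuclideanSpace ℝ (Fin n)) :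
    rotFun φ i j x i = Real.cos φ * x i - Real.sin φ * x j := if_pos rfl

lemma rotFun_apply_j {n : ℕ} (φ : ℝ) (i j : Fin n) (hij : i ≠ j)
    (x : EuclideanSpace ℝ (Fin n)) :
    rotFun φ i j x j = Real.sin φ * x i + Real.cos φ * x j := by
  simp [rotFun, hij.symm]

lemma rotFun_apply_other {n : ℕ} (φ : ℝ) (i j t : Fin n) (hti : t ≠ i) (htj : t ≠ j)
    (x : EuclideanSpace ℝ (Fin n)) : rotFun φ i j x t = x t := by
  simp [rotFun, hti, htj]

lemma rotFun_comp {n : ℕ} (i j : Fin n) (hij : i ≠ j) (φ ψ : ℝ)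
    (x : EuclideanSpace ℝ (Fin n)) :
    rotFun φ i j (rotFun ψ i j x) = rotFun (φ + ψ) i j x := by
  ext t
  by_cases hti : t = i
  · subst hti
    rw [rotFun_apply_i, rotFun_apply_i, rotFun_apply_i, rotFun_apply_j _ _ _ hij,
      Real.cos_add, Real.sin_add]
    ring
  · by_cases htj : t = j
    · subst htj
      rw [rotFun_apply_j _ _ _ hij, rotFun_apply_j _ _ _ hij, rotFun_apply_i,
        rotFun_apply_j _ _ _ hij, Real.cos_add, Real.sin_add]
      ring
    · rw [rotFun_apply_other _ _ _ _ hti htj, rotFun_apply_other _ _ _ _ hti htj,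
        rotFun_apply_other _ _ _ _ hti htj]

lemma rotFun_zero {n : ℕ} (i j : Fin n) (x : EuclideanSpace ℝ (Fin n)) :
    rotFun 0 i j x = x := by
  ext t
  simp only [rotFun, PiLp.toLp_apply, Real.cos_zero, Real.sin_zero, one_mul, zero_mul, sub_zero, add_zero,
    zero_add]
  split_ifs with h1 h2
  · rw [h1]
  · rw [h2]
  · rfl

lemma rotFun_sum_sq {n : ℕ} (i j : Fin n) (hij : i ≠ j) (φ : ℝ)
    (x : EuclideanSpace ℝ (Fin n)) :
    ∑ t, (rotFun φ i j x t) ^ 2 = ∑ t, (x t) ^ 2 := by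
  classical
  have key : ∀ y : Fin n → ℝ, ∑ t, y t ^ 2
      = (∑ t ∈ Finset.univ \ {i, j}, y t ^ 2) + (y i ^ 2 + y j ^ 2) := by
    intro y
    have h := Finset.sum_sdiff (f := fun t => y t ^ 2)
      (Finset.subset_univ ({i, j} : Finset (Fin n)))
    rw [Finset.sum_pair hij] at h
    exact h.symm
  rw [key (fun t => rotFun φ i j x t), key (fun t => x t)]
  have hoff : (∑ t ∈ Finset.univ \ {i, j}, (rotFun φ i j x t) ^ 2)
      = ∑ t ∈ Finset.univ \ {i, j}, (x t) ^ 2 := by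
    refine Finset.sum_congr rfl fun t ht => ?_
    simp only [Finset.mem_sdiff, Finset.mem_univ, true_and, Finset.mem_insert,
      Finset.mem_singleton] at ht
    push_neg at ht
    rw [rotFun_apply_other _ _ _ _ ht.1 ht.2]
  rw [hoff, rotFun_apply_i, rotFun_apply_j _ _ _ hij]
  have h := Real.sin_sq_add_cos_sq φ
  linear_combination (x i ^ 2 + x j ^ 2) * h

def rotEquiv {n : ℕ} (i j : Fin n) (hij : i ≠ j) (φ : ℝ) :
    EuclideanSpace ℝ (Fin n) ≃ₗᵢ[ℝ] EuclideanSpace ℝ (Fin n) :=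
{ toLinearEquiv :=
  { toFun := rotFun φ i j
    map_add' := fun x y => by
      ext t
      simp only [rotFun, PiLp.add_apply, PiLp.toLp_apply]
      split_ifs <;> ring
    map_smul' := fun c x => by
      ext t
      simp only [rotFun, PiLp.toLp_apply, PiLp.smul_apply, smul_eq_mul, RingHom.id_apply]
      split_ifs <;> ring
    invFun := rotFun (-φ) i j
    left_inv := fun x => by
      show rotFun (-φ) i j (rotFun φ i j x) = x
      rw [rotFun_comp i j hij, show -φ + φ = 0 from by ring, rotFun_zero]
    right_inv := fun x => by
      show rotFun φ i j (rotFun (-φ) i j x) = x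
      rw [rotFun_comp i j hij, show φ + -φ = 0 from by ring, rotFun_zero] }
  norm_map' := fun x => by
    rw [EuclideanSpace.norm_eq, EuclideanSpace.norm_eq]
    congr 1
    simp only [Real.norm_eq_abs, sq_abs]
    exact rotFun_sum_sq i j hij φ x }

@[simp] lemma rotEquiv_apply {n : ℕ} (i j : Fin n) (hij : i ≠ j) (φ : ℝ)
    (x : EuclideanSpace ℝ (Fin n)) : rotEquiv i j hij φ x = rotFun φ i j x := rfl

/-! ### invariance consequences -/

lemma integral_comp_isometry {n : ℕ} {σ : Measure (EuclideanSpace ℝ (Fin n))}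
    (hRI : ∀ e : EuclideanSpace ℝ (Fin n) ≃ₗᵢ[ℝ] EuclideanSpace ℝ (Fin n), σ.map e = σ)
    (e : EuclideanSpace ℝ (Fin n) ≃ₗᵢ[ℝ] EuclideanSpace ℝ (Fin n))
    {f : EuclideanSpace ℝ (Fin n) → ℝ} (hf : AEStronglyMeasurable f σ) :
    ∫ x, f (e x) ∂σ = ∫ x, f x ∂σ := by
  have hm : AEStronglyMeasurable f (σ.map e) := by rwa [hRI e]
  calc ∫ x, f (e x) ∂σ = ∫ y, f y ∂(σ.map e) :=
        (integral_map e.continuous.measurable.aemeasurable hm).symm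
    _ = ∫ x, f x ∂σ := by rw [hRI e]

lemma measure_comp_isometry {n : ℕ} {σ : Measure (EuclideanSpace ℝ (Fin n))}
    (hRI : ∀ e : EuclideanSpace ℝ (Fin n) ≃ₗᵢ[ℝ] EuclideanSpace ℝ (Fin n), σ.map e = σ)
    (e : EuclideanSpace ℝ (Fin n) ≃ₗᵢ[ℝ] EuclideanSpace ℝ (Fin n))
    {S : Set (EuclideanSpace ℝ (Fin n))} (hS : MeasurableSet S) :
    σ (⇑e ⁻¹' S) = σ S := by
  conv_rhs => rw [← hRI e]
  rw [Measure.map_apply e.continuous.measurable hS]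

lemma ae_norm_eq {n : ℕ} {σ : Measure (EuclideanSpace ℝ (Fin n))} [IsProbabilityMeasure σ]
    {r : ℝ} (hsupp : σ {x | ‖x‖ = r} = 1) : ∀ᵐ x ∂σ, ‖x‖ = r := by
  have hms : MeasurableSet {x : EuclideanSpace ℝ (Fin n) | ‖x‖ = r} :=
    measurable_norm (measurableSet_singleton r)
  have h0 : σ ({x : EuclideanSpace ℝ (Fin n) | ‖x‖ = r}ᶜ) = 0 :=
    (prob_compl_eq_zero_iff hms).2 hsupp
  exact ae_iff.2 h0

lemma integrable_of_bound {n : ℕ} {σ : Measure (EuclideanSpace ℝ (Fin n))}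
    [IsProbabilityMeasure σ] {r : ℝ} (hae : ∀ᵐ x ∂σ, ‖x‖ = r)
    {f : EuclideanSpace ℝ (Fin n) → ℝ} (hf : Continuous f) (C : ℝ)
    (hb : ∀ x, ‖x‖ = r → |f x| ≤ C) : Integrable f σ :=
  (integrable_const C).mono' hf.aestronglyMeasurable
    (hae.mono fun x hx => by rw [Real.norm_eq_abs]; exact hb x hx)

/-! ### the angular integrals -/

def D (k : ℕ) : ℝ := ∫ φ in (0:ℝ)..(2*π), Real.cos φ ^ (2*k)

lemma D_def (k : ℕ) : D k = ∫ φ in (0:ℝ)..(2*π), Real.cos φ ^ (2*k) := rfl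

lemma D_succ_mul (k : ℕ) : (2*(k:ℝ)+2) * D (k+1) = (2*(k:ℝ)+1) * D k := by
  have e : 2*(k+1) = 2*k+2 := by ring
  have hraw : D (k+1) = (((2*k : ℕ):ℝ)+1)/(((2*k : ℕ):ℝ)+2) * D k := by
    rw [D_def, e, integral_cos_pow, Real.sin_two_pi, Real.sin_zero, ← D_def]
    norm_num
  rw [hraw]
  have h2 : ((2*k : ℕ):ℝ) = 2*(k:ℝ) := by push_cast; ring
  rw [h2]
  have hne : 2*(k:ℝ)+2 ≠ 0 := by positivity
  field_simp
  all_goals ring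

lemma ang_core (g : ℝ → ℝ) (hper : Function.Periodic g (2*π)) (θ : ℝ) :
    ∫ φ in (0:ℝ)..(2*π), g (θ + φ) = ∫ φ in (0:ℝ)..(2*π), g φ := by
  rw [intervalIntegral.integral_comp_add_left g θ]
  have h1 : θ + 2*π = θ + 2*π := rfl
  have h := hper.intervalIntegral_add_eq θ 0
  simpa [add_zero, zero_add] using h

lemma ang1 (k : ℕ) (X Y : ℝ) :
    (∫ φ in (0:ℝ)..(2*π), (Real.cos φ * X - Real.sin φ * Y) ^ (2*(k+1)))
      = (X^2+Y^2)^(k+1) * D (k+1) := by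
  by_cases h0 : X = 0 ∧ Y = 0
  · obtain ⟨rfl, rfl⟩ := h0
    have e1 : (2*(k+1)) ≠ 0 := by omega
    have e2 : (k+1) ≠ 0 := by omega
    simp [zero_pow e1, zero_pow e2]
  · set z : ℂ := (X:ℂ) + (Y:ℂ) * Complex.I with hzdef
    have hre : z.re = X := by simp [hzdef]
    have him : z.im = Y := by simp [hzdef]
    have hz0 : z ≠ 0 := by
      intro hc
      apply h0
      constructor
      · rw [← hre, hc, Complex.zero_re]
      · rw [← him, hc, Complex.zero_im]
    set ρ := ‖z‖ with hρdef
    set θ := Complex.arg z with hθdef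
    have hρ : 0 < ρ := norm_pos_iff.2 hz0
    have hXe : X = ρ * Real.cos θ := by
      rw [hθdef, Complex.cos_arg hz0, hre, ← hρdef]
      field_simp
    have hYe : Y = ρ * Real.sin θ := by
      rw [hθdef, Complex.sin_arg, him, ← hρdef]
      field_simp
    have hρ2 : ρ^2 = X^2 + Y^2 := by
      rw [hρdef, Complex.sq_norm, Complex.normSq_apply, hre, him]
      ring
    have hkey : ∀ φ : ℝ, Real.cos φ * X - Real.sin φ * Y = ρ * Real.cos (θ + φ) := by
      intro φ; rw [hXe, hYe, Real.cos_add]; ring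
    have hper : Function.Periodic (fun ψ => Real.cos ψ ^ (2*(k+1))) (2*π) := by
      intro ψ; simp [Real.cos_add_two_pi]
    calc (∫ φ in (0:ℝ)..(2*π), (Real.cos φ * X - Real.sin φ * Y) ^ (2*(k+1)))
        = ∫ φ in (0:ℝ)..(2*π), ρ^(2*(k+1)) * Real.cos (θ + φ) ^ (2*(k+1)) := by
          refine intervalIntegral.integral_congr fun φ _ => ?_
          rw [hkey φ, mul_pow]
      _ = ρ^(2*(k+1)) * ∫ φ in (0:ℝ)..(2*π), Real.cos (θ + φ) ^ (2*(k+1)) :=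
          intervalIntegral.integral_const_mul _ _
      _ = ρ^(2*(k+1)) * D (k+1) := by rw [ang_core _ hper θ, D_def]
      _ = (X^2+Y^2)^(k+1) * D (k+1) := by rw [pow_mul, hρ2]

lemma ang2 (k : ℕ) (X Y : ℝ) :
    (∫ φ in (0:ℝ)..(2*π),
        (Real.cos φ * X - Real.sin φ * Y) ^ (2*k) * (Real.sin φ * X + Real.cos φ * Y)^2)
      = (X^2+Y^2)^(k+1) * (D k - D (k+1)) := by
  by_cases h0 : X = 0 ∧ Y = 0
  · obtain ⟨rfl, rfl⟩ := h0
    have e2 : (k+1) ≠ 0 := by omega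
    simp [zero_pow e2]
  · set z : ℂ := (X:ℂ) + (Y:ℂ) * Complex.I with hzdef
    have hre : z.re = X := by simp [hzdef]
    have him : z.im = Y := by simp [hzdef]
    have hz0 : z ≠ 0 := by
      intro hc
      apply h0
      constructor
      · rw [← hre, hc, Complex.zero_re]
      · rw [← him, hc, Complex.zero_im]
    set ρ := ‖z‖ with hρdef
    set θ := Complex.arg z with hθdef
    have hρ : 0 < ρ := norm_pos_iff.2 hz0
    have hXe : X = ρ * Real.cos θ := by
      rw [hθdef, Complex.cos_arg hz0, hre, ← hρdef]
      field_simp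
    have hYe : Y = ρ * Real.sin θ := by
      rw [hθdef, Complex.sin_arg, him, ← hρdef]
      field_simp
    have hρ2 : ρ^2 = X^2 + Y^2 := by
      rw [hρdef, Complex.sq_norm, Complex.normSq_apply, hre, him]
      ring
    have hkey : ∀ φ : ℝ, Real.cos φ * X - Real.sin φ * Y = ρ * Real.cos (θ + φ) := by
      intro φ; rw [hXe, hYe, Real.cos_add]; ring
    have hkey2 : ∀ φ : ℝ, Real.sin φ * X + Real.cos φ * Y = ρ * Real.sin (θ + φ) := by
      intro φ; rw [hXe, hYe, Real.sin_add]; ring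
    have hper : Function.Periodic (fun ψ => Real.cos ψ ^ (2*k) * Real.sin ψ ^ 2) (2*π) := by
      intro ψ; simp [Real.cos_add_two_pi, Real.sin_add_two_pi]
    have hsplit : ∀ ψ : ℝ, Real.cos ψ ^ (2*k) * Real.sin ψ ^ 2
        = Real.cos ψ ^ (2*k) - Real.cos ψ ^ (2*(k+1)) := by
      intro ψ
      linear_combination (Real.cos ψ ^ (2*k)) * (Real.sin_sq_add_cos_sq ψ)
    calc (∫ φ in (0:ℝ)..(2*π),
            (Real.cos φ * X - Real.sin φ * Y) ^ (2*k) * (Real.sin φ * X + Real.cos φ * Y)^2)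
        = ∫ φ in (0:ℝ)..(2*π),
            ρ^(2*(k+1)) * (Real.cos (θ + φ) ^ (2*k) * Real.sin (θ + φ) ^ 2) := by
          refine intervalIntegral.integral_congr fun φ _ => ?_
          rw [hkey φ, hkey2 φ]
          ring
      _ = ρ^(2*(k+1)) * ∫ φ in (0:ℝ)..(2*π), Real.cos (θ + φ) ^ (2*k) * Real.sin (θ + φ) ^ 2 :=
          intervalIntegral.integral_const_mul _ _
      _ = ρ^(2*(k+1)) * ∫ φ in (0:ℝ)..(2*π), Real.cos φ ^ (2*k) * Real.sin φ ^ 2 := by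
          rw [ang_core _ hper θ]
      _ = ρ^(2*(k+1)) * (D k - D (k+1)) := by
          congr 1
          rw [intervalIntegral.integral_congr (fun φ _ => hsplit φ),
            intervalIntegral.integral_sub (f := fun φ => Real.cos φ ^ (2*k))
              (g := fun φ => Real.cos φ ^ (2*(k+1)))
              ((Real.continuous_cos.pow _).intervalIntegrable _ _)
              ((Real.continuous_cos.pow _).intervalIntegrable _ _),
            D_def, D_def]
      _ = (X^2+Y^2)^(k+1) * (D k - D (k+1)) := by rw [pow_mul, hρ2]

/-! ### Fubini -/

lemma swap_integral {n : ℕ} {σ : Measure (EuclideanSpace ℝ (Fin n))}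
    [IsProbabilityMeasure σ] {r : ℝ} (hae : ∀ᵐ x ∂σ, ‖x‖ = r)
    (H : ℝ → EuclideanSpace ℝ (Fin n) → ℝ)
    (hH : Continuous fun p : ℝ × EuclideanSpace ℝ (Fin n) => H p.1 p.2)
    (C : ℝ) (hb : ∀ φ x, ‖x‖ = r → |H φ x| ≤ C) :
    (∫ φ in (0:ℝ)..(2*π), (∫ x, H φ x ∂σ))
      = ∫ x, (∫ φ in (0:ℝ)..(2*π), H φ x) ∂σ := by
  have h2π : (0:ℝ) ≤ 2*π := by positivity
  set μ := volume.restrict (Set.Ioc (0:ℝ) (2*π)) with hμdef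
  haveI : IsFiniteMeasure μ := ⟨by
    rw [hμdef, Measure.restrict_apply_univ]; exact measure_Ioc_lt_top⟩
  have hnull : (μ.prod σ) (Set.univ ×ˢ {x : EuclideanSpace ℝ (Fin n) | ¬ (‖x‖ = r)}) = 0 := by
    rw [Measure.prod_prod]
    have h0 : σ {x : EuclideanSpace ℝ (Fin n) | ¬ (‖x‖ = r)} = 0 := ae_iff.1 hae
    rw [h0, mul_zero]
  have hint : Integrable (Function.uncurry H) (μ.prod σ) := by
    refine (integrable_const C).mono' hH.aestronglyMeasurable ?_
    rw [ae_iff]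
    refine measure_mono_null (fun p hp => ?_) hnull
    refine Set.mem_prod.2 ⟨Set.mem_univ _, fun h2 => ?_⟩
    exact hp (by rw [Real.norm_eq_abs]; exact hb p.1 p.2 h2)
  calc (∫ φ in (0:ℝ)..(2*π), (∫ x, H φ x ∂σ))
      = ∫ φ, (∫ x, H φ x ∂σ) ∂μ := intervalIntegral.integral_of_le h2π
    _ = ∫ x, (∫ φ, H φ x ∂μ) ∂σ := integral_integral_swap hint
    _ = ∫ x, (∫ φ in (0:ℝ)..(2*π), H φ x) ∂σ := by
        refine integral_congr_ae (ae_of_all _ fun x => ?_)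
        exact (intervalIntegral.integral_of_le h2π).symm

/-! ### moment identities -/

lemma mom_sq_sum {n : ℕ} {σ : Measure (EuclideanSpace ℝ (Fin n))} [IsProbabilityMeasure σ]
    {r : ℝ} (hae : ∀ᵐ x ∂σ, ‖x‖ = r) (k : ℕ) (i : Fin n) :
    (∑ j, ∫ x, (x i)^(2*k) * (x j)^2 ∂σ) = r^2 * ∫ x, (x i)^(2*k) ∂σ := by
  have hint : ∀ j : Fin n, Integrable (fun x : EuclideanSpace ℝ (Fin n) =>
      (x i)^(2*k) * (x j)^2) σ := by
    intro j
    refine integrable_of_bound hae ?_ (r^(2*k) * r^2) ?_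
    · exact ((SphereConc.coord_cont i).pow _).mul ((SphereConc.coord_cont j).pow _)
    · intro x hx
      have h1 : |x i| ≤ r := (coord_abs i x).trans_eq hx
      have h2 : |x j| ≤ r := (coord_abs j x).trans_eq hx
      have hr0 : 0 ≤ r := hx ▸ norm_nonneg x
      rw [abs_mul, abs_pow, abs_pow]
      exact mul_le_mul (pow_le_pow_left₀ (abs_nonneg _) h1 _)
        (pow_le_pow_left₀ (abs_nonneg _) h2 _) (by positivity) (by positivity)
  rw [← integral_finset_sum _ (fun j _ => hint j), ← integral_const_mul]
  refine integral_congr_ae ?_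
  filter_upwards [hae] with x hx
  calc (∑ j, (x i)^(2*k) * (x j)^2) = (x i)^(2*k) * ∑ j, (x j)^2 := by rw [Finset.mul_sum]
    _ = (x i)^(2*k) * ‖x‖^2 := by rw [sq_sum_eq]
    _ = r^2 * (x i)^(2*k) := by rw [hx]; ring

lemma swap_coord {n : ℕ} {σ : Measure (EuclideanSpace ℝ (Fin n))}
    (hRI : ∀ e : EuclideanSpace ℝ (Fin n) ≃ₗᵢ[ℝ] EuclideanSpace ℝ (Fin n), σ.map e = σ)
    (k : ℕ) (i j j' : Fin n) (hj : j ≠ i) (hj' : j' ≠ i) :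
    (∫ x, (x i)^(2*k) * (x j)^2 ∂σ) = ∫ x, (x i)^(2*k) * (x j')^2 ∂σ := by
  set e : EuclideanSpace ℝ (Fin n) ≃ₗᵢ[ℝ] EuclideanSpace ℝ (Fin n) :=
    LinearIsometryEquiv.piLpCongrLeft 2 ℝ ℝ (Equiv.swap j j') with hedef
  have happ : ∀ (x : EuclideanSpace ℝ (Fin n)) (t : Fin n),
      e x t = x (Equiv.swap j j' t) := by
    intro x t
    rw [hedef]
    simp [LinearIsometryEquiv.piLpCongrLeft_apply, Equiv.piCongrLeft'_apply]
  have hmeas : AEStronglyMeasurable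
      (fun x : EuclideanSpace ℝ (Fin n) => (x i)^(2*k) * (x j')^2) σ :=
    (((SphereConc.coord_cont i).pow _).mul ((SphereConc.coord_cont j').pow _)).aestronglyMeasurable
  have h := integral_comp_isometry hRI e hmeas
  rw [← h]
  refine integral_congr_ae (ae_of_all _ fun x => ?_)
  have hswi : (Equiv.swap j j') i = i := Equiv.swap_apply_of_ne_of_ne hj.symm hj'.symm
  have hswj : (Equiv.swap j j') j' = j := Equiv.swap_apply_right j j'
  have h1 : e x i = x i := by rw [happ, hswi]
  have h2 : e x j' = x j := by rw [happ, hswj]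
  show x i ^ (2*k) * x j ^ 2 = e x i ^ (2*k) * e x j' ^ 2
  rw [h1, h2]

lemma q_eq {n : ℕ} {σ : Measure (EuclideanSpace ℝ (Fin n))} [IsProbabilityMeasure σ]
    (hRI : ∀ e : EuclideanSpace ℝ (Fin n) ≃ₗᵢ[ℝ] EuclideanSpace ℝ (Fin n), σ.map e = σ)
    {r : ℝ} (hae : ∀ᵐ x ∂σ, ‖x‖ = r) (k : ℕ) (i j : Fin n) (hij : i ≠ j) :
    (2*(k:ℝ)+1) * (∫ x, (x i)^(2*k) * (x j)^2 ∂σ) = ∫ x, (x i)^(2*(k+1)) ∂σ := by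
  have hci : Continuous fun p : ℝ × EuclideanSpace ℝ (Fin n) => p.2 i :=
    (SphereConc.coord_cont i).comp continuous_snd
  have hcj : Continuous fun p : ℝ × EuclideanSpace ℝ (Fin n) => p.2 j :=
    (SphereConc.coord_cont j).comp continuous_snd
  have hc1 : Continuous fun p : ℝ × EuclideanSpace ℝ (Fin n) =>
      Real.cos p.1 * p.2 i - Real.sin p.1 * p.2 j :=
    ((Real.continuous_cos.comp continuous_fst).mul hci).sub
      ((Real.continuous_sin.comp continuous_fst).mul hcj)
  have hc2 : Continuous fun p : ℝ × EuclideanSpace ℝ (Fin n) =>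
      Real.sin p.1 * p.2 i + Real.cos p.1 * p.2 j :=
    ((Real.continuous_sin.comp continuous_fst).mul hci).add
      ((Real.continuous_cos.comp continuous_fst).mul hcj)
  have habs1 : ∀ (φ : ℝ) (x : EuclideanSpace ℝ (Fin n)), ‖x‖ = r →
      |Real.cos φ * x i - Real.sin φ * x j| ≤ 2*r := by
    intro φ x hx
    have h1 : |x i| ≤ r := (coord_abs i x).trans_eq hx
    have h2 : |x j| ≤ r := (coord_abs j x).trans_eq hx
    have hr0 : 0 ≤ r := hx ▸ norm_nonneg x
    have hc := Real.abs_cos_le_one φ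
    have hs := Real.abs_sin_le_one φ
    have hA : |Real.cos φ * x i| ≤ r := by
      rw [abs_mul]
      calc |Real.cos φ| * |x i| ≤ 1 * r :=
            mul_le_mul hc h1 (abs_nonneg _) zero_le_one
        _ = r := one_mul r
    have hB : |Real.sin φ * x j| ≤ r := by
      rw [abs_mul]
      calc |Real.sin φ| * |x j| ≤ 1 * r :=
            mul_le_mul hs h2 (abs_nonneg _) zero_le_one
        _ = r := one_mul r
    have htri : |Real.cos φ * x i - Real.sin φ * x j|
        ≤ |Real.cos φ * x i| + |Real.sin φ * x j| := by
      rw [sub_eq_add_neg]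
      exact (abs_add_le _ _).trans (by rw [abs_neg])
    linarith
  have habs2 : ∀ (φ : ℝ) (x : EuclideanSpace ℝ (Fin n)), ‖x‖ = r →
      |Real.sin φ * x i + Real.cos φ * x j| ≤ 2*r := by
    intro φ x hx
    have h1 : |x i| ≤ r := (coord_abs i x).trans_eq hx
    have h2 : |x j| ≤ r := (coord_abs j x).trans_eq hx
    have hc := Real.abs_cos_le_one φ
    have hs := Real.abs_sin_le_one φ
    have hA : |Real.sin φ * x i| ≤ r := by
      rw [abs_mul]
      calc |Real.sin φ| * |x i| ≤ 1 * r :=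
            mul_le_mul hs h1 (abs_nonneg _) zero_le_one
        _ = r := one_mul r
    have hB : |Real.cos φ * x j| ≤ r := by
      rw [abs_mul]
      calc |Real.cos φ| * |x j| ≤ 1 * r :=
            mul_le_mul hc h2 (abs_nonneg _) zero_le_one
        _ = r := one_mul r
    have htri := abs_add_le (Real.sin φ * x i) (Real.cos φ * x j)
    linarith
  -- first identity
  have hswap1 := swap_integral hae
    (fun φ x => (Real.cos φ * x i - Real.sin φ * x j)^(2*(k+1)))
    (hc1.pow _) ((2*r)^(2*(k+1)))
    (by
      intro φ x hx
      rw [abs_pow]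
      exact pow_le_pow_left₀ (abs_nonneg _) (habs1 φ x hx) _)
  have hconst1 : ∀ φ : ℝ,
      (∫ x, (Real.cos φ * x i - Real.sin φ * x j)^(2*(k+1)) ∂σ)
        = ∫ x, (x i)^(2*(k+1)) ∂σ := by
    intro φ
    have hmeas : AEStronglyMeasurable
        (fun x : EuclideanSpace ℝ (Fin n) => (x i)^(2*(k+1))) σ :=
      ((SphereConc.coord_cont i).pow _).aestronglyMeasurable
    have h := integral_comp_isometry hRI (rotEquiv i j hij φ) hmeas
    simpa only [rotEquiv_apply, rotFun_apply_i] using h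
  have hL1 : (∫ φ in (0:ℝ)..(2*π),
      (∫ x, (Real.cos φ * x i - Real.sin φ * x j)^(2*(k+1)) ∂σ))
      = (2*π) * ∫ x, (x i)^(2*(k+1)) ∂σ := by
    simp_rw [hconst1]
    rw [intervalIntegral.integral_const]
    simp [smul_eq_mul]
  have hR1 : (∫ x, (∫ φ in (0:ℝ)..(2*π),
      (Real.cos φ * x i - Real.sin φ * x j)^(2*(k+1))) ∂σ)
      = (∫ x, ((x i)^2+(x j)^2)^(k+1) ∂σ) * D (k+1) := by
    have hpt : ∀ x : EuclideanSpace ℝ (Fin n),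
        (∫ φ in (0:ℝ)..(2*π), (Real.cos φ * x i - Real.sin φ * x j)^(2*(k+1)))
          = ((x i)^2+(x j)^2)^(k+1) * D (k+1) := fun x => ang1 k (x i) (x j)
    simp_rw [hpt]
    rw [integral_mul_const]
  have h1 : (2*π) * (∫ x, (x i)^(2*(k+1)) ∂σ)
      = (∫ x, ((x i)^2+(x j)^2)^(k+1) ∂σ) * D (k+1) := by
    rw [← hL1, hswap1, hR1]
  -- second identity
  have hswap2 := swap_integral hae
    (fun φ x => (Real.cos φ * x i - Real.sin φ * x j)^(2*k)
      * (Real.sin φ * x i + Real.cos φ * x j)^2)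
    ((hc1.pow _).mul (hc2.pow _)) ((2*r)^(2*k) * (2*r)^2)
    (by
      intro φ x hx
      have hr0 : 0 ≤ r := hx ▸ norm_nonneg x
      rw [abs_mul, abs_pow, abs_pow]
      exact mul_le_mul (pow_le_pow_left₀ (abs_nonneg _) (habs1 φ x hx) _)
        (pow_le_pow_left₀ (abs_nonneg _) (habs2 φ x hx) _) (by positivity) (by positivity))
  have hconst2 : ∀ φ : ℝ,
      (∫ x, (Real.cos φ * x i - Real.sin φ * x j)^(2*k)
          * (Real.sin φ * x i + Real.cos φ * x j)^2 ∂σ)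
        = ∫ x, (x i)^(2*k) * (x j)^2 ∂σ := by
    intro φ
    have hmeas : AEStronglyMeasurable
        (fun x : EuclideanSpace ℝ (Fin n) => (x i)^(2*k) * (x j)^2) σ :=
      (((SphereConc.coord_cont i).pow _).mul ((SphereConc.coord_cont j).pow _)).aestronglyMeasurable
    have h := integral_comp_isometry hRI (rotEquiv i j hij φ) hmeas
    simpa only [rotEquiv_apply, rotFun_apply_i, rotFun_apply_j _ _ _ hij] using h
  have hL2 : (∫ φ in (0:ℝ)..(2*π),
      (∫ x, (Real.cos φ * x i - Real.sin φ * x j)^(2*k)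
        * (Real.sin φ * x i + Real.cos φ * x j)^2 ∂σ))
      = (2*π) * ∫ x, (x i)^(2*k) * (x j)^2 ∂σ := by
    simp_rw [hconst2]
    rw [intervalIntegral.integral_const]
    simp [smul_eq_mul]
  have hR2 : (∫ x, (∫ φ in (0:ℝ)..(2*π),
      (Real.cos φ * x i - Real.sin φ * x j)^(2*k)
        * (Real.sin φ * x i + Real.cos φ * x j)^2) ∂σ)
      = (∫ x, ((x i)^2+(x j)^2)^(k+1) ∂σ) * (D k - D (k+1)) := by
    have hpt : ∀ x : EuclideanSpace ℝ (Fin n),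
        (∫ φ in (0:ℝ)..(2*π), (Real.cos φ * x i - Real.sin φ * x j)^(2*k)
          * (Real.sin φ * x i + Real.cos φ * x j)^2)
          = ((x i)^2+(x j)^2)^(k+1) * (D k - D (k+1)) := fun x => ang2 k (x i) (x j)
    simp_rw [hpt]
    rw [integral_mul_const]
  have h2 : (2*π) * (∫ x, (x i)^(2*k) * (x j)^2 ∂σ)
      = (∫ x, ((x i)^2+(x j)^2)^(k+1) ∂σ) * (D k - D (k+1)) := by
    rw [← hL2, hswap2, hR2]
  -- combine
  have hD : (2*(k:ℝ)+1) * (D k - D (k+1)) = D (k+1) := by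
    have := D_succ_mul k
    linarith
  have hπ : (2*π) ≠ 0 := by positivity
  apply mul_left_cancel₀ hπ
  calc (2*π) * ((2*(k:ℝ)+1) * (∫ x, (x i)^(2*k) * (x j)^2 ∂σ))
      = (2*(k:ℝ)+1) * ((2*π) * (∫ x, (x i)^(2*k) * (x j)^2 ∂σ)) := by ring
    _ = (2*(k:ℝ)+1) * ((∫ x, ((x i)^2+(x j)^2)^(k+1) ∂σ) * (D k - D (k+1))) := by rw [h2]
    _ = (∫ x, ((x i)^2+(x j)^2)^(k+1) ∂σ) * ((2*(k:ℝ)+1) * (D k - D (k+1))) := by ring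
    _ = (∫ x, ((x i)^2+(x j)^2)^(k+1) ∂σ) * D (k+1) := by rw [hD]
    _ = (2*π) * (∫ x, (x i)^(2*(k+1)) ∂σ) := h1.symm

/-! ### moment bound -/

lemma mom_le {n : ℕ} (hn : 4 ≤ n) [NeZero n] {σ : Measure (EuclideanSpace ℝ (Fin n))}
    [IsProbabilityMeasure σ]
    (hRI : ∀ e : EuclideanSpace ℝ (Fin n) ≃ₗᵢ[ℝ] EuclideanSpace ℝ (Fin n), σ.map e = σ)
    {r : ℝ} (hae : ∀ᵐ x ∂σ, ‖x‖ = r) (k : ℕ) :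
    (∫ x, (x 0 : ℝ)^(2*k) ∂σ)
      ≤ (r^2/(n:ℝ))^k * (Nat.factorial (2*k) : ℝ) / (2^k * (Nat.factorial k : ℝ)) := by
  have hv1 : ((1 : Fin n) : ℕ) = 1 := by
    rw [Fin.val_one']
    exact Nat.mod_eq_of_lt (by omega)
  have h01 : (0 : Fin n) ≠ 1 := by
    intro h
    have h2 := congrArg Fin.val h
    rw [Fin.val_zero, hv1] at h2
    exact absurd h2 (by omega)
  have hn0 : (0:ℝ) < (n:ℝ) := by
    have : 0 < n := by omega
    exact_mod_cast this
  induction k with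
  | zero =>
    simp [Nat.factorial]
  | succ k ih =>
    have hMk_nonneg : 0 ≤ ∫ x, (x 0 : ℝ)^(2*k) ∂σ :=
      integral_nonneg fun x => pow2k_nonneg _ _
    -- sum over coordinates
    have hA := mom_sq_sum hae k (0 : Fin n)
    have hterm0 : (∫ x, (x 0 : ℝ)^(2*k) * (x 0)^2 ∂σ) = ∫ x, (x 0 : ℝ)^(2*(k+1)) ∂σ := by
      refine integral_congr_ae (ae_of_all _ fun x => ?_)
      show (x 0 : ℝ)^(2*k) * (x 0)^2 = (x 0 : ℝ)^(2*(k+1))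
      ring
    have htermj : ∀ j : Fin n, j ≠ 0 →
        (∫ x, (x 0 : ℝ)^(2*k) * (x j)^2 ∂σ) = ∫ x, (x 0 : ℝ)^(2*k) * (x 1)^2 ∂σ := by
      intro j hj
      exact swap_coord hRI k 0 j 1 hj h01.symm
    have hsum_split : (∑ j, ∫ x, (x 0 : ℝ)^(2*k) * (x j)^2 ∂σ)
        = (∫ x, (x 0 : ℝ)^(2*(k+1)) ∂σ)
          + ((n:ℝ) - 1) * ∫ x, (x 0 : ℝ)^(2*k) * (x 1)^2 ∂σ := by
      classical
      rw [← Finset.sum_erase_add Finset.univ _ (Finset.mem_univ (0 : Fin n)), hterm0]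
      have hsame : (∑ j ∈ Finset.univ.erase (0 : Fin n),
          ∫ x, (x 0 : ℝ)^(2*k) * (x j)^2 ∂σ)
          = ((n:ℝ) - 1) * ∫ x, (x 0 : ℝ)^(2*k) * (x 1)^2 ∂σ := by
        rw [Finset.sum_congr rfl (fun j hj => htermj j (Finset.ne_of_mem_erase hj)),
          Finset.sum_const, Finset.card_erase_of_mem (Finset.mem_univ _), Finset.card_univ,
          Fintype.card_fin, nsmul_eq_mul]
        congr 1
        have hn1 : 1 ≤ n := by omega
        push_cast [Nat.cast_sub hn1]
        ring
      rw [hsame]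
      ring
    have hB := q_eq hRI hae k (0 : Fin n) 1 h01
    -- combine : (n + 2k) * M(k+1) = (2k+1) r^2 M k
    have hcomb : (∫ x, (x 0 : ℝ)^(2*(k+1)) ∂σ) * ((n:ℝ) + 2*k)
        = (2*(k:ℝ)+1) * r^2 * ∫ x, (x 0 : ℝ)^(2*k) ∂σ := by
      rw [hsum_split] at hA
      linear_combination (2*(k:ℝ)+1) * hA + (1 - (n:ℝ)) * hB
    have hnum_nonneg : 0 ≤ (2*(k:ℝ)+1) * r^2 * ∫ x, (x 0 : ℝ)^(2*k) ∂σ := by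
      apply mul_nonneg (by positivity) hMk_nonneg
    have hstep : (∫ x, (x 0 : ℝ)^(2*(k+1)) ∂σ)
        ≤ (2*(k:ℝ)+1) * r^2 * (∫ x, (x 0 : ℝ)^(2*k) ∂σ) / (n:ℝ) := by
      have hd : (0:ℝ) < (n:ℝ) + 2*k := by positivity
      have heq : (∫ x, (x 0 : ℝ)^(2*(k+1)) ∂σ)
          = (2*(k:ℝ)+1) * r^2 * (∫ x, (x 0 : ℝ)^(2*k) ∂σ) / ((n:ℝ) + 2*k) :=
        (eq_div_iff hd.ne').2 hcomb
      rw [heq]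
      exact div_le_div_of_nonneg_left hnum_nonneg hn0
        (le_add_of_nonneg_right (by positivity))
    have hfac : ((Nat.factorial (2*(k+1)) : ℕ) : ℝ)
        = (2*(k:ℝ)+2) * ((2*(k:ℝ)+1) * (Nat.factorial (2*k) : ℝ)) := by
      have e1 : 2*(k+1) = (2*k+1)+1 := by ring
      rw [e1, Nat.factorial_succ, Nat.factorial_succ]
      push_cast
      ring
    calc (∫ x, (x 0 : ℝ)^(2*(k+1)) ∂σ)
        ≤ (2*(k:ℝ)+1) * r^2 * (∫ x, (x 0 : ℝ)^(2*k) ∂σ) / (n:ℝ) := hstep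
      _ ≤ (2*(k:ℝ)+1) * r^2 *
            ((r^2/(n:ℝ))^k * (Nat.factorial (2*k) : ℝ) / (2^k * (Nat.factorial k : ℝ))) / (n:ℝ) := by
          exact (div_le_div_iff_of_pos_right hn0).2 (mul_le_mul_of_nonneg_left ih (by positivity))
      _ = (r^2/(n:ℝ))^(k+1) * (Nat.factorial (2*(k+1)) : ℝ)
            / (2^(k+1) * (Nat.factorial (k+1) : ℝ)) := by
          rw [hfac, pow_succ, Nat.factorial_succ, pow_succ]
          have hf1 : ((Nat.factorial k : ℕ) : ℝ) ≠ 0 := by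
            exact_mod_cast (Nat.factorial_ne_zero k)
          have hn0' : (n:ℝ) ≠ 0 := hn0.ne'
          push_cast
          field_simp
          have hnn : (n:ℝ) * (n:ℝ)⁻¹ = 1 := mul_inv_cancel₀ hn0'
          linear_combination (-(r ^ 2 * r ^ (k * 2) * (↑n)⁻¹ ^ k * 2 ^ k * 2)) * hnn

/-! ### mgf bound -/

lemma sinh_int_zero {n : ℕ} (hn : 4 ≤ n) [NeZero n]
    {σ : Measure (EuclideanSpace ℝ (Fin n))} [IsProbabilityMeasure σ]
    (hRI : ∀ e : EuclideanSpace ℝ (Fin n) ≃ₗᵢ[ℝ] EuclideanSpace ℝ (Fin n), σ.map e = σ)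
    (l : ℝ) : (∫ x, Real.sinh (l * x 0) ∂σ) = 0 := by
  have hv1 : ((1 : Fin n) : ℕ) = 1 := by
    rw [Fin.val_one']
    exact Nat.mod_eq_of_lt (by omega)
  have h01 : (0 : Fin n) ≠ 1 := by
    intro h
    have h2 := congrArg Fin.val h
    rw [Fin.val_zero, hv1] at h2
    exact absurd h2 (by omega)
  have hmeas : AEStronglyMeasurable
      (fun x : EuclideanSpace ℝ (Fin n) => Real.sinh (l * x 0)) σ :=
    (Real.continuous_sinh.comp (continuous_const.mul (SphereConc.coord_cont 0))).aestronglyMeasurable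
  have h := integral_comp_isometry hRI (rotEquiv (0 : Fin n) 1 h01 π) hmeas
  simp only [rotEquiv_apply, rotFun_apply_i, Real.cos_pi, Real.sin_pi, neg_one_mul, zero_mul,
    sub_zero, mul_neg, Real.sinh_neg, integral_neg] at h
  linarith

lemma cosh_int_eq {n : ℕ} [NeZero n] {σ : Measure (EuclideanSpace ℝ (Fin n))}
    [IsProbabilityMeasure σ] {r : ℝ} (hae : ∀ᵐ x ∂σ, ‖x‖ = r) (l : ℝ) :
    (∫ x, Real.cosh (l * x 0) ∂σ)
      = ∑' k : ℕ, l^(2*k) / (Nat.factorial (2*k) : ℝ) * (∫ x, (x 0 : ℝ)^(2*k) ∂σ) := by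
  have hmeas : ∀ k : ℕ, AEStronglyMeasurable
      (fun x : EuclideanSpace ℝ (Fin n) => (l * x 0)^(2*k) / (Nat.factorial (2*k) : ℝ)) σ :=
    fun k => (((continuous_const.mul (SphereConc.coord_cont 0)).pow _).div_const _).aestronglyMeasurable
  have hbd : ∀ k : ℕ, (∫⁻ x, ‖(l * x 0)^(2*k) / (Nat.factorial (2*k) : ℝ)‖₊ ∂σ)
      ≤ ENNReal.ofReal ((|l| * r)^(2*k) / (Nat.factorial (2*k) : ℝ)) := by
    intro k
    have hptw : ∀ᵐ x ∂σ, (‖(l * x 0)^(2*k) / (Nat.factorial (2*k) : ℝ)‖₊ : ENNReal)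
        ≤ ENNReal.ofReal ((|l| * r)^(2*k) / (Nat.factorial (2*k) : ℝ)) := by
      filter_upwards [hae] with x hx
      rw [← enorm_eq_nnnorm, ← ofReal_norm]
      apply ENNReal.ofReal_le_ofReal
      rw [Real.norm_eq_abs, abs_div, abs_pow, Nat.abs_cast]
      have h1 : |l * x 0| ≤ |l| * r := by
        rw [abs_mul]
        exact mul_le_mul_of_nonneg_left ((coord_abs 0 x).trans_eq hx) (abs_nonneg l)
      have hfp : (0:ℝ) < (Nat.factorial (2*k) : ℝ) := by
        exact_mod_cast Nat.factorial_pos (2*k)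
      exact (div_le_div_iff_of_pos_right hfp).2 (pow_le_pow_left₀ (abs_nonneg _) h1 _)
    calc (∫⁻ x, ‖(l * x 0)^(2*k) / (Nat.factorial (2*k) : ℝ)‖₊ ∂σ)
        ≤ ∫⁻ _, ENNReal.ofReal ((|l| * r)^(2*k) / (Nat.factorial (2*k) : ℝ)) ∂σ :=
          lintegral_mono_ae hptw
      _ = ENNReal.ofReal ((|l| * r)^(2*k) / (Nat.factorial (2*k) : ℝ)) := by
          rw [lintegral_const, measure_univ, mul_one]
  have hsummc : Summable (fun k : ℕ => (|l| * r)^(2*k) / (Nat.factorial (2*k) : ℝ)) :=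
    (Real.hasSum_cosh (|l| * r)).summable
  have hne : (∑' k : ℕ, ∫⁻ x, ‖(l * x 0)^(2*k) / (Nat.factorial (2*k) : ℝ)‖₊ ∂σ) ≠ ⊤ := by
    apply ne_top_of_le_ne_top ?_ (ENNReal.tsum_le_tsum hbd)
    rw [← ENNReal.ofReal_tsum_of_nonneg (fun k => div_nonneg (pow2k_nonneg _ _) (Nat.cast_nonneg _)) hsummc]
    exact ENNReal.ofReal_ne_top
  calc (∫ x, Real.cosh (l * x 0) ∂σ)
      = ∫ x, (∑' k : ℕ, (l * x 0)^(2*k) / (Nat.factorial (2*k) : ℝ)) ∂σ := by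
        refine integral_congr_ae (ae_of_all _ fun x => ?_)
        exact Real.cosh_eq_tsum _
    _ = ∑' k : ℕ, ∫ x, (l * x 0)^(2*k) / (Nat.factorial (2*k) : ℝ) ∂σ :=
        integral_tsum hmeas hne
    _ = ∑' k : ℕ, l^(2*k) / (Nat.factorial (2*k) : ℝ) * (∫ x, (x 0 : ℝ)^(2*k) ∂σ) := by
        refine tsum_congr fun k => ?_
        have hrw : (fun x : EuclideanSpace ℝ (Fin n) =>
            (l * x 0)^(2*k) / (Nat.factorial (2*k) : ℝ))
            = fun x => (l^(2*k) / (Nat.factorial (2*k) : ℝ)) * (x 0 : ℝ)^(2*k) := by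
          funext x
          rw [mul_pow]
          ring
        rw [hrw, integral_const_mul]

lemma mgf_le {n : ℕ} (hn : 4 ≤ n) [NeZero n]
    {σ : Measure (EuclideanSpace ℝ (Fin n))} [IsProbabilityMeasure σ]
    (hRI : ∀ e : EuclideanSpace ℝ (Fin n) ≃ₗᵢ[ℝ] EuclideanSpace ℝ (Fin n), σ.map e = σ)
    {r : ℝ} (hr : 0 < r) (hae : ∀ᵐ x ∂σ, ‖x‖ = r) (l : ℝ) :
    (∫ x, Real.exp (l * x 0) ∂σ) ≤ Real.exp (l^2 * r^2 / (2*(n:ℝ))) := by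
  have hn0 : (0:ℝ) < (n:ℝ) := by
    have : 0 < n := by omega
    exact_mod_cast this
  have habs_cosh : ∀ y : ℝ, |Real.cosh y| ≤ Real.exp |y| := by
    intro y
    rw [abs_of_pos (Real.cosh_pos _)]
    rw [Real.cosh_eq]
    have h1 : Real.exp y ≤ Real.exp |y| := Real.exp_le_exp.2 (le_abs_self y)
    have h2 : Real.exp (-y) ≤ Real.exp |y| := Real.exp_le_exp.2 (neg_le_abs y)
    linarith
  have habs_sinh : ∀ y : ℝ, |Real.sinh y| ≤ Real.exp |y| := by
    intro y
    rw [Real.sinh_eq]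
    have h1 : Real.exp y ≤ Real.exp |y| := Real.exp_le_exp.2 (le_abs_self y)
    have h2 : Real.exp (-y) ≤ Real.exp |y| := Real.exp_le_exp.2 (neg_le_abs y)
    have h3 : (0:ℝ) < Real.exp y := Real.exp_pos y
    have h4 : (0:ℝ) < Real.exp (-y) := Real.exp_pos _
    rw [abs_le]
    constructor <;> [linarith; linarith]
  have hbound : ∀ (x : EuclideanSpace ℝ (Fin n)), ‖x‖ = r → |l * x 0| ≤ |l| * r := by
    intro x hx
    rw [abs_mul]
    exact mul_le_mul_of_nonneg_left ((coord_abs 0 x).trans_eq hx) (abs_nonneg l)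
  have hint_cosh : Integrable (fun x : EuclideanSpace ℝ (Fin n) =>
      Real.cosh (l * x 0)) σ := by
    refine integrable_of_bound hae
      (Real.continuous_cosh.comp (continuous_const.mul (SphereConc.coord_cont 0)))
      (Real.exp (|l| * r)) fun x hx => ?_
    exact (habs_cosh _).trans (Real.exp_le_exp.2 (hbound x hx))
  have hint_sinh : Integrable (fun x : EuclideanSpace ℝ (Fin n) =>
      Real.sinh (l * x 0)) σ := by
    refine integrable_of_bound hae
      (Real.continuous_sinh.comp (continuous_const.mul (SphereConc.coord_cont 0)))
      (Real.exp (|l| * r)) fun x hx => ?_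
    exact (habs_sinh _).trans (Real.exp_le_exp.2 (hbound x hx))
  have hsplit : (∫ x, Real.exp (l * x 0) ∂σ)
      = (∫ x, Real.cosh (l * x 0) ∂σ) + ∫ x, Real.sinh (l * x 0) ∂σ := by
    rw [← integral_add hint_cosh hint_sinh]
    refine integral_congr_ae (ae_of_all _ fun x => ?_)
    exact (Real.cosh_add_sinh _).symm
  rw [hsplit, sinh_int_zero hn hRI l, add_zero, cosh_int_eq hae l]
  -- termwise comparison
  have hterm : ∀ k : ℕ, l^(2*k) / (Nat.factorial (2*k) : ℝ) * (∫ x, (x 0 : ℝ)^(2*k) ∂σ)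
      ≤ (l^2 * r^2 / (2*(n:ℝ)))^k / (Nat.factorial k : ℝ) := by
    intro k
    have hM := mom_le hn hRI hae k
    have hl2 : (0:ℝ) ≤ l^(2*k) := pow2k_nonneg l k
    have hfp : (0:ℝ) < (Nat.factorial (2*k) : ℝ) := by
      exact_mod_cast Nat.factorial_pos (2*k)
    have hcoef : (0:ℝ) ≤ l^(2*k) / (Nat.factorial (2*k) : ℝ) := by positivity
    calc l^(2*k) / (Nat.factorial (2*k) : ℝ) * (∫ x, (x 0 : ℝ)^(2*k) ∂σ)
        ≤ l^(2*k) / (Nat.factorial (2*k) : ℝ)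
            * ((r^2/(n:ℝ))^k * (Nat.factorial (2*k) : ℝ) / (2^k * (Nat.factorial k : ℝ))) :=
          mul_le_mul_of_nonneg_left hM hcoef
      _ = (l^2 * r^2 / (2*(n:ℝ)))^k / (Nat.factorial k : ℝ) := by
          have hfk : (Nat.factorial k : ℝ) ≠ 0 := by
            exact_mod_cast Nat.factorial_ne_zero k
          have hnne : (n:ℝ) ≠ 0 := ne_of_gt hn0
          rw [pow_mul]
          field_simp
          have h22 : (1/2:ℝ) ^ k * 2 ^ k = 1 := by rw [← mul_pow]; norm_num
          linear_combination (-(l ^ (k * 2) * r ^ (k * 2) * (↑n)⁻¹ ^ k)) * h22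
  have hMnn : ∀ k : ℕ, 0 ≤ ∫ x, (x 0 : ℝ)^(2*k) ∂σ :=
    fun k => integral_nonneg fun x => pow2k_nonneg _ _
  have hsum2 : Summable (fun k : ℕ => (l^2 * r^2 / (2*(n:ℝ)))^k / (Nat.factorial k : ℝ)) :=
    Real.summable_pow_div_factorial _
  have hsum1 : Summable (fun k : ℕ =>
      l^(2*k) / (Nat.factorial (2*k) : ℝ) * (∫ x, (x 0 : ℝ)^(2*k) ∂σ)) := by
    refine Summable.of_nonneg_of_le (fun k => ?_) hterm hsum2
    have hfp : (0:ℝ) < (Nat.factorial (2*k) : ℝ) := by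
      exact_mod_cast Nat.factorial_pos (2*k)
    exact mul_nonneg (div_nonneg (pow2k_nonneg l k) hfp.le) (hMnn k)
  have hexp : Real.exp (l^2 * r^2 / (2*(n:ℝ)))
      = ∑' k : ℕ, (l^2 * r^2 / (2*(n:ℝ)))^k / (Nat.factorial k : ℝ) := by
    rw [Real.exp_eq_exp_ℝ, NormedSpace.exp_eq_tsum_div]
  rw [hexp]
  exact Summable.tsum_le_tsum hterm hsum1 hsum2

end

end SphereConc

theorem stmt_4 (n : ℕ) (hn : 4 ≤ n) (r : ℝ) (hr : 0 < r)
    (σ : Measure (EuclideanSpace ℝ (Fin n))) [IsProbabilityMeasure σ]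
    (hRI : ∀ e : EuclideanSpace ℝ (Fin n) ≃ₗᵢ[ℝ] EuclideanSpace ℝ (Fin n), σ.map e = σ)
    (hsupp : σ {x | ‖x‖ = r} = 1)
    (u : EuclideanSpace ℝ (Fin n)) (hu : ‖u‖ = 1) (t : ℝ) (ht : 0 ≤ t) :
    (σ {x | t ≤ ⟪u, x⟫}).toReal ≤
      Real.sqrt 2 * Real.exp (-(t ^ 2 * ((n : ℝ) - 2)) / (2 * r ^ 2)) := by
  classical
  haveI : NeZero n := ⟨by omega⟩
  have hae : ∀ᵐ x ∂σ, ‖x‖ = r := SphereConc.ae_norm_eq hsupp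
  have hSm : MeasurableSet {y : EuclideanSpace ℝ (Fin n) | t ≤ y 0} :=
    measurableSet_le measurable_const ((SphereConc.coord_cont (0 : Fin n)).measurable)
  -- reduce to a coordinate function via a reflection mapping u to e₀
  have e1norm : ‖(EuclideanSpace.single (0 : Fin n) (1:ℝ))‖ = 1 := by
    rw [EuclideanSpace.norm_single]; norm_num
  set g := Submodule.reflection (ℝ ∙ (u - EuclideanSpace.single (0 : Fin n) (1:ℝ)))ᗮ with hgdef
  have hgu : g u = EuclideanSpace.single (0 : Fin n) (1:ℝ) :=
    Submodule.reflection_sub (by rw [hu, e1norm])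
  have hcoord : ∀ x : EuclideanSpace ℝ (Fin n), (g x) 0 = ⟪u, x⟫ := by
    intro x
    have h1 : ((g x) 0 : ℝ) = ⟪EuclideanSpace.single (0 : Fin n) (1:ℝ), g x⟫ := by
      rw [EuclideanSpace.inner_single_left]
      simp
    rw [h1, ← hgu, LinearIsometryEquiv.inner_map_map]
  have hset : {x : EuclideanSpace ℝ (Fin n) | t ≤ ⟪u, x⟫}
      = ⇑g ⁻¹' {y : EuclideanSpace ℝ (Fin n) | t ≤ y 0} := by
    ext x
    simp only [Set.mem_setOf_eq, Set.mem_preimage]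
    rw [hcoord x]
  rw [hset, SphereConc.measure_comp_isometry hRI g hSm]
  -- Chernoff bound with the coordinate function
  set l := t * (n:ℝ) / r^2 with hldef
  have hl : 0 ≤ l := by
    rw [hldef]
    exact div_nonneg (mul_nonneg ht (Nat.cast_nonneg n)) (by positivity)
  have hexp_int : Integrable
      (fun x : EuclideanSpace ℝ (Fin n) => Real.exp (l * (x 0 - t))) σ := by
    refine SphereConc.integrable_of_bound hae
      (Real.continuous_exp.comp
        (continuous_const.mul ((SphereConc.coord_cont (0 : Fin n)).sub continuous_const)))
      (Real.exp (|l| * (r + |t|))) ?_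
    intro x hx
    rw [abs_of_pos (Real.exp_pos _)]
    apply Real.exp_le_exp.2
    have htri : |x 0 - t| ≤ |x 0| + |t| := by
      rw [sub_eq_add_neg]
      exact (abs_add_le _ _).trans (by rw [abs_neg])
    calc l * (x 0 - t) ≤ |l * (x 0 - t)| := le_abs_self _
      _ = |l| * |x 0 - t| := abs_mul _ _
      _ ≤ |l| * (|x 0| + |t|) := mul_le_mul_of_nonneg_left htri (abs_nonneg l)
      _ ≤ |l| * (r + |t|) := by
          refine mul_le_mul_of_nonneg_left ?_ (abs_nonneg l)
          have hc0 := (SphereConc.coord_abs 0 x).trans_eq hx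
          linarith
  have hmarkov : (σ {y : EuclideanSpace ℝ (Fin n) | t ≤ y 0}).toReal
      ≤ Real.exp (-(l*t)) * ∫ x, Real.exp (l * x 0) ∂σ := by
    have h1 : (σ {y : EuclideanSpace ℝ (Fin n) | t ≤ y 0}).toReal
        = ∫ _ in {y : EuclideanSpace ℝ (Fin n) | t ≤ y 0}, (1:ℝ) ∂σ := by
      rw [setIntegral_const]; simp; rfl
    have h2 : (∫ _ in {y : EuclideanSpace ℝ (Fin n) | t ≤ y 0}, (1:ℝ) ∂σ)
        ≤ ∫ x in {y : EuclideanSpace ℝ (Fin n) | t ≤ y 0}, Real.exp (l * (x 0 - t)) ∂σ := by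
      refine setIntegral_mono_on ((integrable_const 1).integrableOn)
        hexp_int.integrableOn hSm ?_
      intro x hx
      exact Real.one_le_exp (mul_nonneg hl (sub_nonneg.2 hx))
    have h3 : (∫ x in {y : EuclideanSpace ℝ (Fin n) | t ≤ y 0},
        Real.exp (l * (x 0 - t)) ∂σ) ≤ ∫ x, Real.exp (l * (x 0 - t)) ∂σ :=
      setIntegral_le_integral hexp_int (Filter.Eventually.of_forall fun x => (Real.exp_pos _).le)
    have h4 : (∫ x, Real.exp (l * (x 0 - t)) ∂σ)
        = Real.exp (-(l*t)) * ∫ x, Real.exp (l * x 0) ∂σ := by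
      rw [← integral_const_mul]
      refine integral_congr_ae (Filter.Eventually.of_forall fun x => ?_)
      show Real.exp (l * (x 0 - t)) = Real.exp (-(l*t)) * Real.exp (l * x 0)
      rw [← Real.exp_add]
      congr 1
      ring
    rw [h1]
    exact (h2.trans h3).trans_eq h4
  have hmgf := SphereConc.mgf_le hn hRI hr hae l
  have hchain : (σ {y : EuclideanSpace ℝ (Fin n) | t ≤ y 0}).toReal
      ≤ Real.exp (-(l*t)) * Real.exp (l^2*r^2/(2*(n:ℝ))) :=
    hmarkov.trans (mul_le_mul_of_nonneg_left hmgf (Real.exp_pos _).le)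
  have hrne : r ≠ 0 := ne_of_gt hr
  have hnne : (n:ℝ) ≠ 0 := by
    have h0 : (0:ℝ) < (n:ℝ) := by exact_mod_cast (by omega : 0 < n)
    exact ne_of_gt h0
  have hco : Real.exp (-(l*t)) * Real.exp (l^2*r^2/(2*(n:ℝ)))
      = Real.exp (-(t^2*(n:ℝ))/(2*r^2)) := by
    rw [← Real.exp_add]
    congr 1
    rw [hldef]
    field_simp
    ring
  have h5 : Real.exp (-(t^2*(n:ℝ))/(2*r^2)) ≤ Real.exp (-(t^2*((n:ℝ)-2))/(2*r^2)) := by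
    apply Real.exp_le_exp.2
    apply (div_le_div_iff_of_pos_right (by positivity : (0:ℝ) < 2*r^2)).2
    nlinarith [sq_nonneg t]
  have h6 : (1:ℝ) ≤ Real.sqrt 2 := by
    rw [show (1:ℝ) = Real.sqrt 1 from (Real.sqrt_one).symm]
    exact Real.sqrt_le_sqrt (by norm_num)
  calc (σ {y : EuclideanSpace ℝ (Fin n) | t ≤ y 0}).toReal
      ≤ Real.exp (-(t^2*(n:ℝ))/(2*r^2)) := hchain.trans_eq hco
    _ ≤ Real.exp (-(t ^ 2 * ((n : ℝ) - 2)) / (2 * r ^ 2)) := h5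
    _ ≤ Real.sqrt 2 * Real.exp (-(t ^ 2 * ((n : ℝ) - 2)) / (2 * r ^ 2)) :=
        le_mul_of_one_le_left (Real.exp_pos _).le h6
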